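/- The kernel of the type D odd Demazure operator equals its image: ker(∂_n^d) = im(∂_n^d). Specifically, if ∂_n^d(f) = 0 then f = ∂_n^d(-x_n f). -/
import Mathlib


/-- The kernel of the type D odd Demazure operator equals its image; specifically,
if `∂ₙᵈ f = 0` then `f = ∂ₙᵈ(-xₙ f)`. -/
theorem stmt_13 (n : ℕ) (R : Type*) [Ring R] (x : Fin (n + 2) → R)
    (hx : ∀ a b, a ≠ b → x a * x b + x b * x a = 0)
    (s : R →+* R)
    (hs1 : s (x (Fin.last (n + 1))) = x ((Fin.last n).castSucc))
    (hs2 : s (x ((Fin.last n).castSucc)) = x (Fin.last (n + 1)))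
    (hs3 : ∀ j, j ≠ Fin.last (n + 1) → j ≠ (Fin.last n).castSucc → s (x j) = - x j)
    (D : R →ₗ[ℤ] R) (hD1 : D 1 = 0)
    (hDn : D (x (Fin.last (n + 1))) = -1)
    (hDp : D (x ((Fin.last n).castSucc)) = 1)
    (hDj : ∀ j, j ≠ Fin.last (n + 1) → j ≠ (Fin.last n).castSucc → D (x j) = 0)
    (hL : ∀ f g, D (f * g) = D f * g + s f * D g)
    (hD2 : ∀ f : R, D (D f) = 0) :
    LinearMap.ker D = LinearMap.range D ∧
    ∀ f : R, D f = 0 → f = D (- x (Fin.last (n + 1)) * f) := by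
  have key : ∀ f : R, D f = 0 → f = D (- x (Fin.last (n + 1)) * f) := by
    intro f hf
    rw [neg_mul, map_neg, hL, hDn, hf, mul_zero, add_zero, neg_mul, one_mul, neg_neg]
  refine ⟨?_, key⟩
  ext f
  constructor
  · intro hf
    exact ⟨- x (Fin.last (n + 1)) * f, (key f hf).symm⟩
  · rintro ⟨g, rfl⟩
    exact hD2 g
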